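/- Let n ≥ 2, let C^{β_n}(V;V) be the Banach space of n times continuously Fréchet differentiable φ : V → V with ‖φ‖_{β_n} := Σ_{k=0}^n sup_x ‖D^kφ(x)‖/(1+‖x‖)^{β_k} < ∞, and let W ∈ C^α([0,T]; C^{β_n}(V;V)); regard also W ∈ C^{α,β_n}([0,T]×V;V) via W(t,x) = W_t(x). For y ∈ V let ŷ ∈ L(C^{β_n}(V;V); V) be the evaluation ŷ(φ) := φ(y). Then: (i) if (Y,Ẏ) ∈ 𝓔_W^{2α}, the map t ↦ Ŷ_t (evaluation at Y_t) is α-Hölder from [0,T] into L(C^{β_n}(V;V);V), the map t ↦ Ŷ'_t defined by Ŷ'_t(φ₁)(φ₂) := Dφ₂(Y_t)(φ₁(Ẏ_t)) is α-Hölder from [0,T] into L(C^{β_n}(V;V); L(C^{β_n}(V;V);V)), and the remainder R^{Ŷ}_{s,t} := Ŷ_t − Ŷ_s − Ŷ'_s(W_t−W_s) has finite 2α-Hölder seminorm in operator norm (so (Ŷ,Ŷ') is a linear controlled rough path of W); (ii) conversely, if (Ŷ,Ŷ') with Ŷ_t = evaluation at Y_t and Ŷ'_t of the above form for some α-Hölder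 Y, Ẏ : [0,T] → V is a linear controlled rough path of W, then (Y,Ẏ) ∈ 𝓔_W^{2α}, i.e. R^Y_{s,t} := Y_t − Y_s − (W_t−W_s)(Ẏ_s) has finite 2α-Hölder seminorm in V. -/

import Mathlib

open Set

/-- helper: "trig-type" functions: sin, cos and negatives. -/
def IsTrig (f : ℝ → ℝ) : Prop :=
  f = Real.sin ∨ f = Real.cos ∨ f = (fun x => -Real.sin x) ∨ f = (fun x => -Real.cos x)

lemma IsTrig.sin : IsTrig Real.sin := Or.inl rfl
lemma IsTrig.cos : IsTrig Real.cos := Or.inr (Or.inl rfl)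

lemma IsTrig.deriv {f : ℝ → ℝ} (hf : IsTrig f) : IsTrig (deriv f) := by
  rcases hf with h | h | h | h <;> subst h
  · exact Or.inr (Or.inl Real.deriv_sin)
  · exact Or.inr (Or.inr (Or.inl Real.deriv_cos'))
  · refine Or.inr (Or.inr (Or.inr ?_))
    funext x
    rw [deriv.fun_neg, Real.deriv_sin]
  · refine Or.inl ?_
    funext x
    rw [deriv.fun_neg, Real.deriv_cos]
    ring

lemma IsTrig.iteratedDeriv {f : ℝ → ℝ} (hf : IsTrig f) (k : ℕ) :
    IsTrig (iteratedDeriv k f) := by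
  induction k with
  | zero => simpa [iteratedDeriv_zero] using hf
  | succ k ih => rw [iteratedDeriv_succ]; exact ih.deriv

lemma IsTrig.abs_le {f : ℝ → ℝ} (hf : IsTrig f) (x : ℝ) : |f x| ≤ 1 := by
  have hs : |Real.sin x| ≤ 1 := _root_.abs_le.2 ⟨Real.neg_one_le_sin x, Real.sin_le_one x⟩
  have hc : |Real.cos x| ≤ 1 := _root_.abs_le.2 ⟨Real.neg_one_le_cos x, Real.cos_le_one x⟩
  rcases hf with h | h | h | h <;> subst h <;> (try simp only [abs_neg]) <;> assumption

lemma IsTrig.contDiff {f : ℝ → ℝ} (hf : IsTrig f) : ContDiff ℝ ⊤ f := by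
  rcases hf with h | h | h | h <;> subst h
  · exact Real.contDiff_sin
  · exact Real.contDiff_cos
  · exact Real.contDiff_sin.neg
  · exact Real.contDiff_cos.neg

variable {V : Type*} [NormedAddCommGroup V] [NormedSpace ℝ V]

/-- `φ` is a test function of `C^{β_n}(V;V)` with norm pieces bounded by `N`. -/
def TestBound (n : ℕ) (β : ℕ → ℝ) (φ : V → V) (N : ℝ) : Prop :=
  ContDiff ℝ n φ ∧ ∀ k ≤ n, ∀ x : V, ‖iteratedFDeriv ℝ k φ x‖ ≤ N * (1 + ‖x‖) ^ (β k)

lemma one_le_rpow_base (x : V) {b : ℝ} (hb : 0 ≤ b) : 1 ≤ (1 + ‖x‖) ^ b :=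
  Real.one_le_rpow (by simpa using norm_nonneg x) hb

lemma testBound_trig (n : ℕ) (β : ℕ → ℝ) (hβ : ∀ k ≤ n, 0 ≤ β k)
    {f : ℝ → ℝ} (hf : IsTrig f) (ℓ : V →L[ℝ] ℝ) (hℓ : ‖ℓ‖ ≤ 1) (v : V) (hv : ‖v‖ ≤ 1) :
    TestBound n β (fun x => f (ℓ x) • v) 1 := by
  have hfc : ContDiff ℝ (n : ℕ∞) f := hf.contDiff.of_le le_top
  have hcomp : ContDiff ℝ (n : ℕ∞) (f ∘ ℓ) := hfc.comp ℓ.contDiff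
  constructor
  · exact hcomp.smul contDiff_const
  · intro k hk x
    have h1 : (fun x : V => f (ℓ x) • v)
        = (ContinuousLinearMap.toSpanSingleton ℝ v) ∘ (f ∘ ℓ) := by
      funext y; simp [ContinuousLinearMap.toSpanSingleton_apply, Function.comp]
    rw [h1, ContinuousLinearMap.iteratedFDeriv_comp_left _ (hcomp.contDiffAt (x := x)) (by exact_mod_cast hk)]
    have h2 : iteratedFDeriv ℝ k (f ∘ ℓ) x
        = (iteratedFDeriv ℝ k f (ℓ x)).compContinuousLinearMap fun _ => ℓ :=
      ℓ.iteratedFDeriv_comp_right hfc x (by exact_mod_cast hk)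
    have h3 : ‖iteratedFDeriv ℝ k (f ∘ ℓ) x‖ ≤ 1 := by
      rw [h2]
      refine le_trans (ContinuousMultilinearMap.norm_compContinuousLinearMap_le _ _) ?_
      have h4 : ‖iteratedFDeriv ℝ k f (ℓ x)‖ ≤ 1 := by
        rw [norm_iteratedFDeriv_eq_norm_iteratedDeriv]
        simpa [Real.norm_eq_abs] using (hf.iteratedDeriv k).abs_le (ℓ x)
      calc ‖iteratedFDeriv ℝ k f (ℓ x)‖ * ∏ _i : Fin k, ‖ℓ‖
          ≤ 1 * ∏ _i : Fin k, (1:ℝ) := by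
            refine mul_le_mul h4 ?_ (Finset.prod_nonneg fun _ _ => norm_nonneg _) one_pos.le
            exact Finset.prod_le_prod (fun _ _ => norm_nonneg _) fun _ _ => hℓ
        _ = 1 := by simp
    refine le_trans (le_trans (ContinuousLinearMap.norm_compContinuousMultilinearMap_le _ _) ?_)
      (by simpa using one_le_rpow_base x (hβ k hk))
    rw [ContinuousLinearMap.norm_toSpanSingleton]
    calc ‖v‖ * ‖iteratedFDeriv ℝ k (f ∘ ℓ) x‖ ≤ 1 * 1 :=
      mul_le_mul hv h3 (norm_nonneg _) one_pos.le
    _ = 1 := one_mul 1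

lemma fderiv_trig_apply {f f' : ℝ → ℝ} (hf : ∀ y, HasDerivAt f (f' y) y)
    (ℓ : V →L[ℝ] ℝ) (v w x : V) :
    fderiv ℝ (fun y => f (ℓ y) • v) x w = (f' (ℓ x) * ℓ w) • v := by
  have h1 : HasFDerivAt (f ∘ ℓ) ((f' (ℓ x)) • (ℓ : V →L[ℝ] ℝ)) x :=
    (hf (ℓ x)).comp_hasFDerivAt x ℓ.hasFDerivAt
  have h2 : HasFDerivAt (fun y => f (ℓ y) • v)
      (((f' (ℓ x)) • (ℓ : V →L[ℝ] ℝ)).smulRight v) x := h1.smul_const v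
  rw [h2.fderiv]
  simp [ContinuousLinearMap.smulRight_apply, ContinuousLinearMap.smul_apply, smul_eq_mul]

lemma abs_cos_sub_cos_le' (a b : ℝ) : |Real.cos a - Real.cos b| ≤ |a - b| := by
  rw [Real.cos_sub_cos]
  rw [abs_mul, abs_mul]
  have h1 : |Real.sin ((a + b) / 2)| ≤ 1 :=
    _root_.abs_le.2 ⟨Real.neg_one_le_sin _, Real.sin_le_one _⟩
  have h2 : |Real.sin ((a - b) / 2)| ≤ |(a - b) / 2| := Real.abs_sin_le_abs
  calc |(-2 : ℝ)| * |Real.sin ((a + b) / 2)| * |Real.sin ((a - b) / 2)|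
      ≤ 2 * 1 * |(a - b) / 2| := by
        refine mul_le_mul (mul_le_mul (by norm_num) h1 (abs_nonneg _) (by norm_num)) h2
          (abs_nonneg _) (by norm_num)
    _ = |a - b| := by rw [abs_div, abs_two]; ring

lemma abs_sin_sub_sin_le' (a b : ℝ) : |Real.sin a - Real.sin b| ≤ |a - b| := by
  rw [Real.sin_sub_sin, abs_mul, abs_mul]
  have h1 : |Real.cos ((a + b) / 2)| ≤ 1 :=
    _root_.abs_le.2 ⟨Real.neg_one_le_cos _, Real.cos_le_one _⟩
  have h2 : |Real.sin ((a - b) / 2)| ≤ |(a - b) / 2| := Real.abs_sin_le_abs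
  calc |(2 : ℝ)| * |Real.sin ((a - b) / 2)| * |Real.cos ((a + b) / 2)|
      ≤ 2 * |(a - b) / 2| * 1 := by
        refine mul_le_mul (mul_le_mul (by norm_num) h2 (abs_nonneg _) (by norm_num)) h1
          (abs_nonneg _) (by positivity)
    _ = |a - b| := by rw [abs_div, abs_two]; ring

lemma sin_taylor (b δ : ℝ) : |Real.sin (b + δ) - Real.sin b - δ * Real.cos b| ≤ δ ^ 2 := by
  set g : ℝ → ℝ := fun x => Real.sin x - x * Real.cos b with hg
  have hd : ∀ x : ℝ, HasDerivAt g (Real.cos x - Real.cos b) x := fun x =>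
    (Real.hasDerivAt_sin x).sub (hasDerivAt_mul_const (Real.cos b))
  have key : ‖g (b + δ) - g b‖ ≤ |δ| * ‖(b + δ) - b‖ := by
    refine (convex_closedBall b |δ|).norm_image_sub_le_of_norm_deriv_le
      (fun x _ => (hd x).differentiableAt) (fun x hx => ?_)
      (Metric.mem_closedBall_self (abs_nonneg δ)) ?_
    · rw [(hd x).deriv, Real.norm_eq_abs]
      refine le_trans (abs_cos_sub_cos_le' x b) ?_
      simpa [Real.dist_eq] using hx
    · simp [Metric.mem_closedBall, Real.dist_eq]
  have h1 : g (b + δ) - g b = Real.sin (b + δ) - Real.sin b - δ * Real.cos b := by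
    simp only [hg]; ring
  have h2 : (b + δ) - b = δ := by ring
  rw [h1, h2, Real.norm_eq_abs, Real.norm_eq_abs] at key
  calc |Real.sin (b + δ) - Real.sin b - δ * Real.cos b| ≤ |δ| * |δ| := key
    _ = δ ^ 2 := by rw [← abs_mul, ← sq, abs_sq]

lemma cos_taylor (b δ : ℝ) : |Real.cos (b + δ) - Real.cos b + δ * Real.sin b| ≤ δ ^ 2 := by
  set g : ℝ → ℝ := fun x => Real.cos x + x * Real.sin b with hg
  have hd : ∀ x : ℝ, HasDerivAt g (-Real.sin x + Real.sin b) x := fun x =>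
    (Real.hasDerivAt_cos x).add (hasDerivAt_mul_const (Real.sin b))
  have key : ‖g (b + δ) - g b‖ ≤ |δ| * ‖(b + δ) - b‖ := by
    refine (convex_closedBall b |δ|).norm_image_sub_le_of_norm_deriv_le
      (fun x _ => (hd x).differentiableAt) (fun x hx => ?_)
      (Metric.mem_closedBall_self (abs_nonneg δ)) ?_
    · rw [(hd x).deriv, Real.norm_eq_abs]
      have : -Real.sin x + Real.sin b = Real.sin b - Real.sin x := by ring
      rw [this]
      refine le_trans (abs_sin_sub_sin_le' b x) ?_
      rw [abs_sub_comm]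
      simpa [Real.dist_eq] using hx
    · simp [Metric.mem_closedBall, Real.dist_eq]
  have h1 : g (b + δ) - g b = Real.cos (b + δ) - Real.cos b + δ * Real.sin b := by
    simp only [hg]; ring
  have h2 : (b + δ) - b = δ := by ring
  rw [h1, h2, Real.norm_eq_abs, Real.norm_eq_abs] at key
  calc |Real.cos (b + δ) - Real.cos b + δ * Real.sin b| ≤ |δ| * |δ| := key
    _ = δ ^ 2 := by rw [← abs_mul, ← sq, abs_sq]

lemma part_ii_core (T α : ℝ) (hT : 0 < T) (hα : 0 < α)
    (n : ℕ) (β : ℕ → ℝ) (hβ : ∀ k ≤ n, 0 ≤ β k)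
    (W : ℝ → V → V) (Y Yd : ℝ → V)
    (CY : ℝ) (hCY : 0 ≤ CY)
    (hY : ∀ s ∈ Icc (0:ℝ) T, ∀ t ∈ Icc (0:ℝ) T, ‖Y t - Y s‖ ≤ CY * |t - s| ^ α)
    (C : ℝ)
    (H : ∀ (φ : V → V) (N : ℝ), 0 ≤ N → TestBound n β φ N →
        ∀ s ∈ Icc (0 : ℝ) T, ∀ t ∈ Icc (0 : ℝ) T,
          ‖φ (Y t) - φ (Y s) - fderiv ℝ φ (Y s) (W t (Yd s) - W s (Yd s))‖
            ≤ C * N * |t - s| ^ (2 * α)) :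
    ∃ C' : ℝ, ∀ s ∈ Icc (0 : ℝ) T, ∀ t ∈ Icc (0 : ℝ) T,
        ‖Y t - Y s - (W t (Yd s) - W s (Yd s))‖ ≤ C' * |t - s| ^ (2 * α) := by
  -- C is nonnegative
  have hzero : TestBound n β (fun _ : V => (0 : V)) 1 := by
    refine ⟨contDiff_const, fun k hk x => ?_⟩
    rw [iteratedFDeriv_zero_fun]
    simp only [Pi.zero_apply, norm_zero, one_mul]
    positivity
  have hC0 : 0 ≤ C := by
    have h := H (fun _ => 0) 1 zero_le_one hzero 0 (by constructor <;> [rfl; exact hT.le])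
      T (by constructor <;> [exact hT.le; rfl])
    simp only [fderiv_fun_const, Pi.zero_apply, ContinuousLinearMap.zero_apply, sub_zero, sub_self,
      norm_zero, mul_one] at h
    have hpos : (0:ℝ) < |T| ^ (2 * α) :=
      Real.rpow_pos_of_pos (abs_pos.mpr hT.ne') _
    nlinarith
  refine ⟨2 * C + 2 * CY ^ 2, fun s hs t ht => ?_⟩
  set w := W t (Yd s) - W s (Yd s) with hw
  set u := Y t - Y s - w with hu
  have hrhs0 : (0:ℝ) ≤ (2 * C + 2 * CY ^ 2) * |t - s| ^ (2 * α) := by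
    have := Real.rpow_nonneg (abs_nonneg (t - s)) (2 * α)
    nlinarith
  rcases subsingleton_or_nontrivial V with hV | hV
  · have : u = 0 := Subsingleton.elim u 0
    rw [this, norm_zero]; exact hrhs0
  by_cases hu0 : u = 0
  · rw [hu0, norm_zero]; exact hrhs0
  obtain ⟨ℓ, hℓ1, hℓu⟩ := exists_dual_vector ℝ u (norm_ne_zero_iff.2 hu0)
  obtain ⟨v₀, hv₀⟩ := exists_ne (0 : V)
  set v : V := ‖v₀‖⁻¹ • v₀ with hv
  have hv1 : ‖v‖ = 1 := by
    rw [hv, norm_smul, norm_inv, norm_norm, inv_mul_cancel₀ (norm_ne_zero_iff.2 hv₀)]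
  set b := ℓ (Y s) with hb
  set δ := ℓ (Y t) - ℓ (Y s) with hδ
  have hbδ : b + δ = ℓ (Y t) := by rw [hb, hδ]; ring
  -- apply hypothesis with sin and cos test functions
  have hsin := H (fun x => Real.sin (ℓ x) • v) 1 zero_le_one
    (testBound_trig n β hβ IsTrig.sin ℓ hℓ1.le v hv1.le) s hs t ht
  have hcos := H (fun x => Real.cos (ℓ x) • v) 1 zero_le_one
    (testBound_trig n β hβ IsTrig.cos ℓ hℓ1.le v hv1.le) s hs t ht
  rw [fderiv_trig_apply Real.hasDerivAt_sin ℓ v w (Y s)] at hsin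
  rw [fderiv_trig_apply Real.hasDerivAt_cos ℓ v w (Y s)] at hcos
  have e1 : Real.sin (ℓ (Y t)) • v - Real.sin (ℓ (Y s)) • v
      - (Real.cos (ℓ (Y s)) * ℓ w) • v
      = (Real.sin (ℓ (Y t)) - Real.sin b - Real.cos b * ℓ w) • v := by
    rw [hb, sub_smul, sub_smul]
  have e2 : Real.cos (ℓ (Y t)) • v - Real.cos (ℓ (Y s)) • v
      - (-Real.sin (ℓ (Y s)) * ℓ w) • v
      = (Real.cos (ℓ (Y t)) - Real.cos b + Real.sin b * ℓ w) • v := by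
    rw [hb]
    have : Real.cos (ℓ (Y t)) - Real.cos (ℓ (Y s)) + Real.sin (ℓ (Y s)) * ℓ w
        = Real.cos (ℓ (Y t)) - Real.cos (ℓ (Y s)) - (-Real.sin (ℓ (Y s)) * ℓ w) := by ring
    rw [this, sub_smul, sub_smul]
  rw [e1] at hsin
  rw [e2] at hcos
  simp only [norm_smul, hv1, mul_one, Real.norm_eq_abs] at hsin hcos
  -- Taylor bounds
  have ht1 : |Real.sin (ℓ (Y t)) - Real.sin b - δ * Real.cos b| ≤ δ ^ 2 := by
    rw [← hbδ]; exact sin_taylor b δ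
  have ht2 : |Real.cos (ℓ (Y t)) - Real.cos b + δ * Real.sin b| ≤ δ ^ 2 := by
    rw [← hbδ]; exact cos_taylor b δ
  -- combine
  have hc1 : |Real.cos b * (δ - ℓ w)| ≤ C * |t - s| ^ (2 * α) + δ ^ 2 := by
    have e : Real.cos b * (δ - ℓ w)
        = (Real.sin (ℓ (Y t)) - Real.sin b - Real.cos b * ℓ w)
          - (Real.sin (ℓ (Y t)) - Real.sin b - δ * Real.cos b) := by ring
    rw [e]
    exact le_trans (abs_sub _ _) (add_le_add hsin ht1)
  have hc2 : |Real.sin b * (δ - ℓ w)| ≤ C * |t - s| ^ (2 * α) + δ ^ 2 := by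
    have e : Real.sin b * (δ - ℓ w)
        = (Real.cos (ℓ (Y t)) - Real.cos b + δ * Real.sin b)
          - (Real.cos (ℓ (Y t)) - Real.cos b + Real.sin b * ℓ w) := by ring
    rw [e]
    refine le_trans (abs_sub _ _) ?_
    linarith
  -- norm of u via the dual vector
  have hℓu' : (ℓ u : ℝ) = δ - ℓ w := by
    rw [hu, hδ, map_sub, map_sub]
  have hℓu'' : ℓ u = ‖u‖ := by exact_mod_cast hℓu
  have hnu : ‖u‖ = |δ - ℓ w| := by
    rw [← hℓu', hℓu'', abs_norm]
  have hone : (1:ℝ) ≤ |Real.cos b| + |Real.sin b| := by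
    have h1 : |Real.sin b| ≤ 1 := _root_.abs_le.2 ⟨Real.neg_one_le_sin _, Real.sin_le_one _⟩
    have h2 : |Real.cos b| ≤ 1 := _root_.abs_le.2 ⟨Real.neg_one_le_cos _, Real.cos_le_one _⟩
    nlinarith [Real.sin_sq_add_cos_sq b, sq_abs (Real.sin b), sq_abs (Real.cos b),
      abs_nonneg (Real.sin b), abs_nonneg (Real.cos b)]
  have hmain : ‖u‖ ≤ 2 * (C * |t - s| ^ (2 * α)) + 2 * δ ^ 2 := by
    have : ‖u‖ ≤ |Real.cos b * (δ - ℓ w)| + |Real.sin b * (δ - ℓ w)| := by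
      rw [hnu, abs_mul, abs_mul]
      nlinarith [abs_nonneg (δ - ℓ w)]
    linarith
  -- bound δ²
  have hδle : |δ| ≤ CY * |t - s| ^ α := by
    have h1 : |δ| ≤ ‖Y t - Y s‖ := by
      rw [hδ, ← map_sub]
      calc |ℓ (Y t - Y s)| ≤ ‖ℓ‖ * ‖Y t - Y s‖ := ℓ.le_opNorm _
        _ = ‖Y t - Y s‖ := by rw [hℓ1, one_mul]
    exact h1.trans (hY s hs t ht)
  have hδsq : δ ^ 2 ≤ CY ^ 2 * |t - s| ^ (2 * α) := by
    have h2 : δ ^ 2 ≤ (CY * |t - s| ^ α) ^ 2 := by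
      rw [← sq_abs δ]
      exact pow_le_pow_left₀ (abs_nonneg δ) hδle 2
    have h3 : (|t - s| ^ α) ^ 2 = |t - s| ^ (2 * α) := by
      rw [← Real.rpow_natCast (|t - s| ^ α) 2, ← Real.rpow_mul (abs_nonneg _)]
      norm_num [mul_comm]
    calc δ ^ 2 ≤ (CY * |t - s| ^ α) ^ 2 := h2
      _ = CY ^ 2 * (|t - s| ^ α) ^ 2 := by ring
      _ = CY ^ 2 * |t - s| ^ (2 * α) := by rw [h3]
  calc ‖u‖ ≤ 2 * (C * |t - s| ^ (2 * α)) + 2 * δ ^ 2 := hmain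
    _ ≤ 2 * (C * |t - s| ^ (2 * α)) + 2 * (CY ^ 2 * |t - s| ^ (2 * α)) := by linarith
    _ = (2 * C + 2 * CY ^ 2) * |t - s| ^ (2 * α) := by ring

lemma rpow_two_mul' {x : ℝ} (hx : 0 ≤ x) {a : ℝ} (ha : 0 ≤ a) :
    x ^ (2 * a) = x ^ a * x ^ a := by
  rw [two_mul, Real.rpow_add_of_nonneg hx ha ha]

lemma testBound_val_le {n : ℕ} {β : ℕ → ℝ} {φ : V → V} {N : ℝ}
    (hφ : TestBound n β φ N) (x : V) : ‖φ x‖ ≤ N * (1 + ‖x‖) ^ (β 0) := by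
  have h := hφ.2 0 (Nat.zero_le n) x
  rwa [norm_iteratedFDeriv_zero] at h

lemma testBound_fderiv_le {n : ℕ} {β : ℕ → ℝ} {φ : V → V} {N : ℝ}
    (hφ : TestBound n β φ N) (hn : 1 ≤ n) (x : V) :
    ‖fderiv ℝ φ x‖ ≤ N * (1 + ‖x‖) ^ (β 1) := by
  have h := hφ.2 1 hn x
  have e : ‖fderiv ℝ φ x‖ = ‖iteratedFDeriv ℝ 1 φ x‖ := by
    rw [← norm_iteratedFDeriv_zero (𝕜 := ℝ) (f := fderiv ℝ φ) (x := x)]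
    exact norm_iteratedFDeriv_fderiv (n := 0)
  rwa [← e] at h

lemma testBound_fderiv2_le {n : ℕ} {β : ℕ → ℝ} {φ : V → V} {N : ℝ}
    (hφ : TestBound n β φ N) (hn : 2 ≤ n) (x : V) :
    ‖fderiv ℝ (fderiv ℝ φ) x‖ ≤ N * (1 + ‖x‖) ^ (β 2) := by
  have h := hφ.2 2 hn x
  have e1 : ‖fderiv ℝ (fderiv ℝ φ) x‖ = ‖iteratedFDeriv ℝ 1 (fderiv ℝ φ) x‖ := by
    rw [← norm_iteratedFDeriv_zero (𝕜 := ℝ) (f := fderiv ℝ (fderiv ℝ φ)) (x := x)]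
    exact norm_iteratedFDeriv_fderiv (n := 0)
  have e2 : ‖iteratedFDeriv ℝ 1 (fderiv ℝ φ) x‖ = ‖iteratedFDeriv ℝ 2 φ x‖ :=
    norm_iteratedFDeriv_fderiv (n := 1)
  rwa [← e2, ← e1] at h

/-- Mean value theorem bound for a test function on a ball. -/
lemma testBound_lip {n : ℕ} {β : ℕ → ℝ} {φ : V → V} {N : ℝ}
    (hφ : TestBound n β φ N) (hn : 1 ≤ n) (hN : 0 ≤ N) (hβ1 : 0 ≤ β 1)
    (c : V) (r D : ℝ) (hD : ∀ z : V, z ∈ Metric.closedBall c r → ‖z‖ ≤ D)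
    {x y : V} (hx : x ∈ Metric.closedBall c r) (hy : y ∈ Metric.closedBall c r) :
    ‖φ y - φ x‖ ≤ N * (1 + D) ^ (β 1) * ‖y - x‖ := by
  refine (convex_closedBall c r).norm_image_sub_le_of_norm_fderiv_le
    (fun z _ => (hφ.1.differentiable (by exact_mod_cast (Nat.one_le_iff_ne_zero.mp hn))).differentiableAt)
    (fun z hz => ?_) hx hy
  refine (testBound_fderiv_le hφ hn z).trans ?_
  have h0 : (0:ℝ) ≤ 1 + ‖z‖ := by positivity
  exact mul_le_mul_of_nonneg_left
    (Real.rpow_le_rpow h0 (by linarith [hD z hz]) hβ1) hN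

/-- Mean value theorem bound for the derivative of a test function on a ball. -/
lemma testBound_fderiv_lip {n : ℕ} {β : ℕ → ℝ} {φ : V → V} {N : ℝ}
    (hφ : TestBound n β φ N) (hn : 2 ≤ n) (hN : 0 ≤ N) (hβ2 : 0 ≤ β 2)
    (c : V) (r D : ℝ) (hD : ∀ z : V, z ∈ Metric.closedBall c r → ‖z‖ ≤ D)
    {x y : V} (hx : x ∈ Metric.closedBall c r) (hy : y ∈ Metric.closedBall c r) :
    ‖fderiv ℝ φ y - fderiv ℝ φ x‖ ≤ N * (1 + D) ^ (β 2) * ‖y - x‖ := by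
  have hdiff : Differentiable ℝ (fderiv ℝ φ) := by
    have : ContDiff ℝ 1 (fderiv ℝ φ) := hφ.1.fderiv_right (by exact_mod_cast hn)
    exact this.differentiable one_ne_zero
  refine (convex_closedBall c r).norm_image_sub_le_of_norm_fderiv_le
    (fun z _ => hdiff.differentiableAt) (fun z hz => ?_) hx hy
  refine (testBound_fderiv2_le hφ hn z).trans ?_
  have h0 : (0:ℝ) ≤ 1 + ‖z‖ := by positivity
  exact mul_le_mul_of_nonneg_left
    (Real.rpow_le_rpow h0 (by linarith [hD z hz]) hβ2) hN

/-- Proposition 5.3: equivalence of nonlinear controlled rough paths of `W` and linear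
controlled rough paths of `W` viewed as a `C^{β_n}(V;V)`-valued path, via the evaluation
operators `ŷ(φ) = φ(y)` and `Ŷ'_t(φ₁)(φ₂) = Dφ₂(Y_t)(φ₁(Ẏ_t))`.  Operator-norm
statements about `L(C^{β_n}(V;V);V)` are expressed through test functions `φ` with norm
bound `N`. -/
theorem stmt_17
    (T α : ℝ) (hT : 0 < T) (hα1 : 1 / 3 < α) (hα2 : α ≤ 1 / 2)
    (n : ℕ) (hn : 2 ≤ n) (β : ℕ → ℝ) (hβ : ∀ k ≤ n, 0 ≤ β k)
    (W : ℝ → V → V) (NW MW : ℝ)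
    (hWsm : ∀ t ∈ Icc (0 : ℝ) T, ContDiff ℝ n (W t))
    (hWval : ∀ t ∈ Icc (0 : ℝ) T, TestBound n β (W t) MW)
    (hWH : ∀ k ≤ n, ∀ s ∈ Icc (0 : ℝ) T, ∀ t ∈ Icc (0 : ℝ) T, ∀ x : V,
      ‖iteratedFDeriv ℝ k (fun y => W t y - W s y) x‖
        ≤ NW * |t - s| ^ α * (1 + ‖x‖) ^ (β k))
    (Y Yd : ℝ → V)
    (hYH : ∃ C : ℝ, ∀ s ∈ Icc (0 : ℝ) T, ∀ t ∈ Icc (0 : ℝ) T,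
      ‖Y t - Y s‖ ≤ C * |t - s| ^ α)
    (hYdH : ∃ C : ℝ, ∀ s ∈ Icc (0 : ℝ) T, ∀ t ∈ Icc (0 : ℝ) T,
      ‖Yd t - Yd s‖ ≤ C * |t - s| ^ α) :
    -- part (i): (Y,Ẏ) ∈ 𝓔_W^{2α} implies (Ŷ, Ŷ') is a linear controlled rough path of W
    ((∃ CR : ℝ, ∀ s ∈ Icc (0 : ℝ) T, ∀ t ∈ Icc (0 : ℝ) T,
        ‖Y t - Y s - (W t (Yd s) - W s (Yd s))‖ ≤ CR * |t - s| ^ (2 * α)) →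
      -- Ŷ is α-Hölder into L(C^{β_n}(V;V);V)
      ((∃ C : ℝ, ∀ (φ : V → V) (N : ℝ), 0 ≤ N → TestBound n β φ N →
          ∀ s ∈ Icc (0 : ℝ) T, ∀ t ∈ Icc (0 : ℝ) T,
            ‖φ (Y t) - φ (Y s)‖ ≤ C * N * |t - s| ^ α) ∧
        -- Ŷ' is α-Hölder into L(C^{β_n}(V;V); L(C^{β_n}(V;V);V))
        (∃ C : ℝ, ∀ (φ₁ φ₂ : V → V) (N₁ N₂ : ℝ), 0 ≤ N₁ → 0 ≤ N₂ →
          TestBound n β φ₁ N₁ → TestBound n β φ₂ N₂ →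
          ∀ s ∈ Icc (0 : ℝ) T, ∀ t ∈ Icc (0 : ℝ) T,
            ‖fderiv ℝ φ₂ (Y t) (φ₁ (Yd t)) - fderiv ℝ φ₂ (Y s) (φ₁ (Yd s))‖
              ≤ C * N₁ * N₂ * |t - s| ^ α) ∧
        -- the remainder R^{Ŷ}_{s,t} = Ŷ_t - Ŷ_s - Ŷ'_s(W_{s,t}) is 2α-Hölder in operator norm
        (∃ C : ℝ, ∀ (φ : V → V) (N : ℝ), 0 ≤ N → TestBound n β φ N →
          ∀ s ∈ Icc (0 : ℝ) T, ∀ t ∈ Icc (0 : ℝ) T,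
            ‖φ (Y t) - φ (Y s) - fderiv ℝ φ (Y s) (W t (Yd s) - W s (Yd s))‖
              ≤ C * N * |t - s| ^ (2 * α)))) ∧
    -- part (ii): conversely, a linear controlled rough path of evaluation form gives
    -- (Y,Ẏ) ∈ 𝓔_W^{2α}
    ((∃ C : ℝ, ∀ (φ : V → V) (N : ℝ), 0 ≤ N → TestBound n β φ N →
        ∀ s ∈ Icc (0 : ℝ) T, ∀ t ∈ Icc (0 : ℝ) T,
          ‖φ (Y t) - φ (Y s) - fderiv ℝ φ (Y s) (W t (Yd s) - W s (Yd s))‖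
            ≤ C * N * |t - s| ^ (2 * α)) →
      ∃ C : ℝ, ∀ s ∈ Icc (0 : ℝ) T, ∀ t ∈ Icc (0 : ℝ) T,
        ‖Y t - Y s - (W t (Yd s) - W s (Yd s))‖ ≤ C * |t - s| ^ (2 * α)) := by
  have hα0 : (0:ℝ) < α := by linarith
  obtain ⟨CY0, hY0⟩ := hYH
  obtain ⟨Cd0, hd0⟩ := hYdH
  set CY := max CY0 0 with hCYdef
  set Cd := max Cd0 0 with hCddef
  have hCY0 : 0 ≤ CY := le_max_right _ _
  have hCd0 : 0 ≤ Cd := le_max_right _ _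
  have hY : ∀ s ∈ Icc (0:ℝ) T, ∀ t ∈ Icc (0:ℝ) T, ‖Y t - Y s‖ ≤ CY * |t - s| ^ α :=
    fun s hs t ht => (hY0 s hs t ht).trans
      (mul_le_mul_of_nonneg_right (le_max_left _ _) (Real.rpow_nonneg (abs_nonneg _) _))
  have hd : ∀ s ∈ Icc (0:ℝ) T, ∀ t ∈ Icc (0:ℝ) T, ‖Yd t - Yd s‖ ≤ Cd * |t - s| ^ α :=
    fun s hs t ht => (hd0 s hs t ht).trans
      (mul_le_mul_of_nonneg_right (le_max_left _ _) (Real.rpow_nonneg (abs_nonneg _) _))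
  -- bounds on the time increment
  have habsT : ∀ s ∈ Icc (0:ℝ) T, ∀ t ∈ Icc (0:ℝ) T, |t - s| ^ α ≤ T ^ α := by
    intro s hs t ht
    refine Real.rpow_le_rpow (abs_nonneg _) ?_ hα0.le
    rw [abs_le]
    constructor <;> [linarith [hs.2, ht.1]; linarith [hs.1, ht.2]]
  have h0T : (0:ℝ) ∈ Icc (0:ℝ) T := ⟨le_refl 0, hT.le⟩
  -- uniform bounds on Y and Yd
  set B : ℝ := ‖Y 0‖ + CY * T ^ α with hBdef
  set Bd : ℝ := ‖Yd 0‖ + Cd * T ^ α with hBddef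
  have hTα : (0:ℝ) ≤ T ^ α := Real.rpow_nonneg hT.le α
  have hYB : ∀ u ∈ Icc (0:ℝ) T, ‖Y u‖ ≤ B := by
    intro u hu
    have h1 : ‖Y u - Y 0‖ ≤ CY * |u - 0| ^ α := hY 0 h0T u hu
    have h2 : |u - 0| ^ α ≤ T ^ α := habsT 0 h0T u hu
    have h3 : ‖Y u‖ ≤ ‖Y 0‖ + ‖Y u - Y 0‖ := by
      calc ‖Y u‖ = ‖Y 0 + (Y u - Y 0)‖ := by congr 1; abel
        _ ≤ ‖Y 0‖ + ‖Y u - Y 0‖ := norm_add_le _ _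
    have := mul_le_mul_of_nonneg_left h2 hCY0
    rw [hBdef]; linarith
  have hdB : ∀ u ∈ Icc (0:ℝ) T, ‖Yd u‖ ≤ Bd := by
    intro u hu
    have h1 : ‖Yd u - Yd 0‖ ≤ Cd * |u - 0| ^ α := hd 0 h0T u hu
    have h2 : |u - 0| ^ α ≤ T ^ α := habsT 0 h0T u hu
    have h3 : ‖Yd u‖ ≤ ‖Yd 0‖ + ‖Yd u - Yd 0‖ := by
      calc ‖Yd u‖ = ‖Yd 0 + (Yd u - Yd 0)‖ := by congr 1; abel
        _ ≤ ‖Yd 0‖ + ‖Yd u - Yd 0‖ := norm_add_le _ _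
    have := mul_le_mul_of_nonneg_left h2 hCd0
    rw [hBddef]; linarith
  have hB0 : 0 ≤ B := le_trans (norm_nonneg _) (hYB 0 h0T)
  have hBd0 : 0 ≤ Bd := le_trans (norm_nonneg _) (hdB 0 h0T)
  have hn1 : 1 ≤ n := le_trans (by norm_num) hn
  have hβ0 : 0 ≤ β 0 := hβ 0 (Nat.zero_le n)
  have hβ1 : 0 ≤ β 1 := hβ 1 hn1
  have hβ2 : 0 ≤ β 2 := hβ 2 hn
  -- membership of Y u, Yd u in the balls
  have hYmem : ∀ u ∈ Icc (0:ℝ) T, Y u ∈ Metric.closedBall (0:V) B := by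
    intro u hu; rw [Metric.mem_closedBall, dist_zero_right]; exact hYB u hu
  have hdmem : ∀ u ∈ Icc (0:ℝ) T, Yd u ∈ Metric.closedBall (0:V) Bd := by
    intro u hu; rw [Metric.mem_closedBall, dist_zero_right]; exact hdB u hu
  have hDB : ∀ z : V, z ∈ Metric.closedBall (0:V) B → ‖z‖ ≤ B := by
    intro z hz; rwa [Metric.mem_closedBall, dist_zero_right] at hz
  have hDBd : ∀ z : V, z ∈ Metric.closedBall (0:V) Bd → ‖z‖ ≤ Bd := by
    intro z hz; rwa [Metric.mem_closedBall, dist_zero_right] at hz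
  constructor
  · -- part (i)
    rintro ⟨CR0, hR0⟩
    set CR := max CR0 0 with hCRdef
    have hCR0 : 0 ≤ CR := le_max_right _ _
    have hR : ∀ s ∈ Icc (0:ℝ) T, ∀ t ∈ Icc (0:ℝ) T,
        ‖Y t - Y s - (W t (Yd s) - W s (Yd s))‖ ≤ CR * |t - s| ^ (2 * α) :=
      fun s hs t ht => (hR0 s hs t ht).trans
        (mul_le_mul_of_nonneg_right (le_max_left _ _) (Real.rpow_nonneg (abs_nonneg _) _))
    refine ⟨⟨CY * (1 + B) ^ (β 1), ?_⟩, ⟨(1 + B) ^ (β 1) * ((1 + Bd) ^ (β 1) * Cd)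
      + (1 + B) ^ (β 2) * CY * (1 + Bd) ^ (β 0), ?_⟩, ?_⟩
    · -- (i-a)
      intro φ N hN hφ s hs t ht
      have h1 := testBound_lip hφ hn1 hN hβ1 0 B B hDB (hYmem s hs) (hYmem t ht)
      have h2 : ‖Y t - Y s‖ ≤ CY * |t - s| ^ α := hY s hs t ht
      calc ‖φ (Y t) - φ (Y s)‖ ≤ N * (1 + B) ^ (β 1) * ‖Y t - Y s‖ := h1
        _ ≤ N * (1 + B) ^ (β 1) * (CY * |t - s| ^ α) :=
            mul_le_mul_of_nonneg_left h2 (by positivity)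
        _ = CY * (1 + B) ^ (β 1) * N * |t - s| ^ α := by ring
    · -- (i-b)
      intro φ₁ φ₂ N₁ N₂ hN₁ hN₂ hφ₁ hφ₂ s hs t ht
      have hA : ‖fderiv ℝ φ₂ (Y t)‖ ≤ N₂ * (1 + B) ^ (β 1) := by
        refine (testBound_fderiv_le hφ₂ hn1 (Y t)).trans ?_
        exact mul_le_mul_of_nonneg_left
          (Real.rpow_le_rpow (by positivity) (by linarith [hYB t ht]) hβ1) hN₂
      have hBb : ‖φ₁ (Yd t) - φ₁ (Yd s)‖ ≤ N₁ * (1 + Bd) ^ (β 1) * (Cd * |t - s| ^ α) :=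
        (testBound_lip hφ₁ hn1 hN₁ hβ1 0 Bd Bd hDBd (hdmem s hs) (hdmem t ht)).trans
          (mul_le_mul_of_nonneg_left (hd s hs t ht) (by positivity))
      have hCc : ‖fderiv ℝ φ₂ (Y t) - fderiv ℝ φ₂ (Y s)‖
          ≤ N₂ * (1 + B) ^ (β 2) * (CY * |t - s| ^ α) :=
        (testBound_fderiv_lip hφ₂ hn hN₂ hβ2 0 B B hDB (hYmem s hs) (hYmem t ht)).trans
          (mul_le_mul_of_nonneg_left (hY s hs t ht) (by positivity))
      have hDd : ‖φ₁ (Yd s)‖ ≤ N₁ * (1 + Bd) ^ (β 0) := by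
        refine (testBound_val_le hφ₁ (Yd s)).trans ?_
        exact mul_le_mul_of_nonneg_left
          (Real.rpow_le_rpow (by positivity) (by linarith [hdB s hs]) hβ0) hN₁
      have e : fderiv ℝ φ₂ (Y t) (φ₁ (Yd t)) - fderiv ℝ φ₂ (Y s) (φ₁ (Yd s))
          = fderiv ℝ φ₂ (Y t) (φ₁ (Yd t) - φ₁ (Yd s))
            + (fderiv ℝ φ₂ (Y t) - fderiv ℝ φ₂ (Y s)) (φ₁ (Yd s)) := by
        rw [map_sub, ContinuousLinearMap.sub_apply]
        abel
      rw [e]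
      have b1 : ‖fderiv ℝ φ₂ (Y t) (φ₁ (Yd t) - φ₁ (Yd s))‖
          ≤ (N₂ * (1 + B) ^ (β 1)) * (N₁ * (1 + Bd) ^ (β 1) * (Cd * |t - s| ^ α)) := by
        refine ((fderiv ℝ φ₂ (Y t)).le_opNorm _).trans ?_
        exact mul_le_mul hA hBb (norm_nonneg _) (by positivity)
      have b2 : ‖(fderiv ℝ φ₂ (Y t) - fderiv ℝ φ₂ (Y s)) (φ₁ (Yd s))‖
          ≤ (N₂ * (1 + B) ^ (β 2) * (CY * |t - s| ^ α)) * (N₁ * (1 + Bd) ^ (β 0)) := by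
        refine ((fderiv ℝ φ₂ (Y t) - fderiv ℝ φ₂ (Y s)).le_opNorm _).trans ?_
        exact mul_le_mul hCc hDd (norm_nonneg _) (by positivity)
      calc ‖fderiv ℝ φ₂ (Y t) (φ₁ (Yd t) - φ₁ (Yd s))
            + (fderiv ℝ φ₂ (Y t) - fderiv ℝ φ₂ (Y s)) (φ₁ (Yd s))‖
          ≤ ‖fderiv ℝ φ₂ (Y t) (φ₁ (Yd t) - φ₁ (Yd s))‖
            + ‖(fderiv ℝ φ₂ (Y t) - fderiv ℝ φ₂ (Y s)) (φ₁ (Yd s))‖ := norm_add_le _ _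
        _ ≤ (N₂ * (1 + B) ^ (β 1)) * (N₁ * (1 + Bd) ^ (β 1) * (Cd * |t - s| ^ α))
            + (N₂ * (1 + B) ^ (β 2) * (CY * |t - s| ^ α)) * (N₁ * (1 + Bd) ^ (β 0)) := by
            linarith
        _ = ((1 + B) ^ (β 1) * ((1 + Bd) ^ (β 1) * Cd)
            + (1 + B) ^ (β 2) * CY * (1 + Bd) ^ (β 0)) * N₁ * N₂ * |t - s| ^ α := by ring
    · -- (i-c)
      set B2 : ℝ := B + CY * T ^ α with hB2def
      refine ⟨(1 + B2) ^ (β 2) * (CY * CY) + (1 + B) ^ (β 1) * CR, ?_⟩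
      intro φ N hN hφ s hs t ht
      set w := W t (Yd s) - W s (Yd s) with hwdef
      set r := CY * |t - s| ^ α with hrdef
      have hr0 : 0 ≤ r := by positivity
      have hrT : r ≤ CY * T ^ α := mul_le_mul_of_nonneg_left (habsT s hs t ht) hCY0
      have hYtmem : Y t ∈ Metric.closedBall (Y s) r := by
        rw [Metric.mem_closedBall, dist_eq_norm]
        exact hY s hs t ht
      have hYsmem : Y s ∈ Metric.closedBall (Y s) r := Metric.mem_closedBall_self hr0
      have hD2 : ∀ z : V, z ∈ Metric.closedBall (Y s) r → ‖z‖ ≤ B2 := by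
        intro z hz
        rw [Metric.mem_closedBall, dist_eq_norm] at hz
        calc ‖z‖ = ‖Y s + (z - Y s)‖ := by congr 1; abel
          _ ≤ ‖Y s‖ + ‖z - Y s‖ := norm_add_le _ _
          _ ≤ B + CY * T ^ α := add_le_add (hYB s hs) (hz.trans hrT)
      -- the auxiliary function g
      have hdφ : Differentiable ℝ φ := hφ.1.differentiable (by exact_mod_cast (Nat.one_le_iff_ne_zero.mp hn1))
      set L := fderiv ℝ φ (Y s) with hLdef
      set g : V → V := fun x => φ x - L x with hgdef
      have hgd : ∀ x : V, HasFDerivAt g (fderiv ℝ φ x - L) x := fun x =>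
        (hdφ x).hasFDerivAt.sub L.hasFDerivAt
      have hmvt : ‖g (Y t) - g (Y s)‖
          ≤ N * (1 + B2) ^ (β 2) * r * ‖Y t - Y s‖ := by
        refine (convex_closedBall (Y s) r).norm_image_sub_le_of_norm_fderiv_le
          (fun z _ => (hgd z).differentiableAt) (fun z hz => ?_) hYsmem hYtmem
        rw [(hgd z).fderiv]
        have h1 : ‖fderiv ℝ φ z - L‖ ≤ N * (1 + B2) ^ (β 2) * ‖z - Y s‖ := by
          rw [hLdef]
          exact testBound_fderiv_lip hφ hn hN hβ2 (Y s) r B2 hD2 hYsmem hz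
        refine h1.trans (mul_le_mul_of_nonneg_left ?_ (by positivity))
        rw [Metric.mem_closedBall, dist_eq_norm] at hz
        exact hz
      have hg : g (Y t) - g (Y s) = φ (Y t) - φ (Y s) - L (Y t - Y s) := by
        rw [hgdef]
        simp only [map_sub]
        abel
      have hsq : r * r = CY * CY * |t - s| ^ (2 * α) := by
        rw [hrdef, rpow_two_mul' (abs_nonneg (t - s)) hα0.le]; ring
      have hmain1 : ‖φ (Y t) - φ (Y s) - L (Y t - Y s)‖
          ≤ N * (1 + B2) ^ (β 2) * (CY * CY * |t - s| ^ (2 * α)) := by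
        rw [← hg, ← hsq]
        refine hmvt.trans ?_
        rw [mul_assoc (N * (1 + B2) ^ (β 2))]
        exact mul_le_mul_of_nonneg_left
          (mul_le_mul_of_nonneg_left (hY s hs t ht) hr0) (by positivity)
      have hmain2 : ‖L (Y t - Y s - w)‖
          ≤ N * (1 + B) ^ (β 1) * (CR * |t - s| ^ (2 * α)) := by
        refine (L.le_opNorm _).trans ?_
        have hL : ‖L‖ ≤ N * (1 + B) ^ (β 1) := by
          rw [hLdef]
          refine (testBound_fderiv_le hφ hn1 (Y s)).trans ?_
          exact mul_le_mul_of_nonneg_left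
            (Real.rpow_le_rpow (by positivity) (by linarith [hYB s hs]) hβ1) hN
        exact mul_le_mul hL (hR s hs t ht) (norm_nonneg _) (by positivity)
      have e : φ (Y t) - φ (Y s) - L w
          = (φ (Y t) - φ (Y s) - L (Y t - Y s)) + L (Y t - Y s - w) := by
        rw [L.map_sub (Y t - Y s) w]
        abel
      rw [e]
      calc ‖(φ (Y t) - φ (Y s) - L (Y t - Y s)) + L (Y t - Y s - w)‖
          ≤ ‖φ (Y t) - φ (Y s) - L (Y t - Y s)‖ + ‖L (Y t - Y s - w)‖ := norm_add_le _ _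
        _ ≤ N * (1 + B2) ^ (β 2) * (CY * CY * |t - s| ^ (2 * α))
            + N * (1 + B) ^ (β 1) * (CR * |t - s| ^ (2 * α)) := by linarith
        _ = ((1 + B2) ^ (β 2) * (CY * CY) + (1 + B) ^ (β 1) * CR) * N
            * |t - s| ^ (2 * α) := by ring
  · -- part (ii)
    rintro ⟨C, H⟩
    exact part_ii_core T α hT hα0 n β hβ W Y Yd CY hCY0 hY C H
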